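/- Fix k ∈ ℕ and ε > 0, and let n ∈ ℕ satisfy n > 2^{k+1}/(3ε) + k − 1. Then the Hamming cube H_{2^k} embeds bi-Lipschitzly into the lamplighter graph Lam(W_{2,n}) with distortion at most 1 + ε, via the map sending x ∈ {0,1}^{2^k} to the pair (⋃_{i : x_i = 1} F_{k−1,i}^n, v₀), where v₀ is the root. -/

import Mathlib

open scoped symmDiff


/-- Condition for a pair `(l, r)` to encode a vertex of the subdivided tree `W_{θ,n}`:
`l` is the binary address (of length `k ≤ n`) of the nearest node at or below the vertex,
and `r` is the distance from the parent node of `l` along the subdivided edge into `l`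
(`r = θ^(n-k)` is the node `l` itself); the root is `([], 0)`. -/
def WCond (θ n : ℕ) (p : List Bool × ℕ) : Prop :=
  p.1.length ≤ n ∧ p.2 ≤ θ ^ n ∧ (p.1 = [] → p.2 = 0) ∧
    (p.1 ≠ [] → 1 ≤ p.2 ∧ p.2 ≤ θ ^ (n - p.1.length))

instance (θ n : ℕ) : DecidablePred (WCond θ n) := fun p => by unfold WCond; infer_instance

/-- Vertices of the tree `W_{θ,n}`. -/
def Wvertex (θ n : ℕ) : Type := { p : List Bool × ℕ // WCond θ n p }

instance (θ n : ℕ) : DecidableEq (Wvertex θ n) := Subtype.instDecidableEq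

/-- Weighted depth of a node `l` of the binary tree `B_n` in `W_{θ,n}`: the sum of the lengths
`θ^(n-i)` of the subdivided edges on the way from the root to `l`. -/
def wdepth (θ n : ℕ) (l : List Bool) : ℕ := ∑ i ∈ Finset.range l.length, θ ^ (n - (i + 1))

/-- Distance of a vertex of `W_{θ,n}` from the root. -/
def wheight (θ n : ℕ) (v : Wvertex θ n) : ℕ := wdepth θ n v.1.1.dropLast + v.1.2

/-- Longest common prefix of two lists. -/
def commonPrefix : List Bool → List Bool → List Bool
  | a :: as, b :: bs => if a = b then a :: commonPrefix as bs else []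
  | _, _ => []

/-- The shortest path metric of the tree `W_{θ,n}`. -/
def Wdist (θ n : ℕ) (x y : Wvertex θ n) : ℕ :=
  if x.1.1.isPrefixOf y.1.1 ∨ y.1.1.isPrefixOf x.1.1 then
    max (wheight θ n x) (wheight θ n y) - min (wheight θ n x) (wheight θ n y)
  else wheight θ n x + wheight θ n y - 2 * wdepth θ n (commonPrefix x.1.1 y.1.1)

/-- The root of `W_{θ,n}`. -/
def Wroot (θ n : ℕ) : Wvertex θ n := ⟨([], 0), by simp [WCond]⟩

/-- The tree `W_{θ,n}` as a simple graph: edges are pairs of vertices at distance 1. -/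
def WGraph (θ n : ℕ) : SimpleGraph (Wvertex θ n) where
  Adj x y := x ≠ y ∧ Wdist θ n x y = 1 ∧ Wdist θ n y x = 1
  symm := ⟨fun _ _ ⟨h1, h2, h3⟩ => ⟨h1.symm, h3, h2⟩⟩
  loopless := ⟨fun _ h => h.1 rfl⟩

/-- The lamplighter graph over a graph `G`: vertices are pairs (set of lamps on, position of
the lamplighter), and moves either shift the lamplighter along an edge of `G` or toggle the
lamp at the current position. -/
def Lam {V : Type*} [DecidableEq V] (G : SimpleGraph V) : SimpleGraph (Finset V × V) where
  Adj p q := (p.1 = q.1 ∧ G.Adj p.2 q.2) ∨ (p.2 = q.2 ∧ p.1 ∆ q.1 = {p.2})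
  symm := by
    refine ⟨?_⟩
    rintro ⟨A, x⟩ ⟨B, y⟩ (⟨h1, h2⟩ | ⟨h1, h2⟩)
    · exact Or.inl ⟨h1.symm, h2.symm⟩
    · exact Or.inr ⟨h1.symm, by rw [symmDiff_comm, h2, h1]⟩
  loopless := by
    refine ⟨?_⟩
    rintro ⟨A, x⟩ (⟨_, h⟩ | ⟨_, h⟩)
    · exact G.irrefl h
    · rw [symmDiff_self] at h
      exact Finset.singleton_ne_empty x h.symm
/-- The vertex set of `W_{θ,n}` is finite. -/
noncomputable instance (θ n : ℕ) : Fintype (Wvertex θ n) :=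
  Fintype.ofInjective
    (fun v => ((fun i : Fin n => v.1.1[(i : ℕ)]?),
      (⟨v.1.2, Nat.lt_succ_of_le v.2.2.1⟩ : Fin (θ ^ n + 1))))
    (by
      rintro ⟨⟨l, r⟩, hv⟩ ⟨⟨l', r'⟩, hv'⟩ h
      have h1 : ∀ i : Fin n, l[(i : ℕ)]? = l'[(i : ℕ)]? :=
        fun i => congrFun (congrArg Prod.fst h) i
      have h2 : r = r' := by
        have := congrArg Prod.snd h
        simpa using this
      have hl : l = l' := List.ext_getElem? (fun i => by
        by_cases hi : i < n
        · exact h1 ⟨i, hi⟩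
        · rw [List.getElem?_eq_none (le_trans hv.1 (not_lt.1 hi)),
            List.getElem?_eq_none (le_trans hv'.1 (not_lt.1 hi))])
      exact Subtype.ext (by simp only [Prod.mk.injEq]; exact ⟨hl, h2⟩))

/-- The union `⋃_{g : x g = 1} F_{k-1,g}^n` of the sets of lamps: `F_{k-1,g}^n` consists of
all vertices of `W_{2,n}` on or below the downward path into the level-`k` node with binary
address `g`. -/
noncomputable def lampSet (k n : ℕ) (x : (Fin k → Bool) → Bool) : Finset (Wvertex 2 n) :=
  Finset.univ.filter
    (fun v => ∃ g : Fin k → Bool, x g = true ∧ (List.ofFn g).isPrefixOf v.1.1)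

/-- The Hamming (`ℓ₁`) distance on the Hamming cube `H_I` with `I = {0,1}^k`. -/
def hamCubeDist {I : Type*} [Fintype I] [DecidableEq I] (x y : I → Bool) : ℕ :=
  (Finset.univ.filter fun i => x i ≠ y i).card

namespace HCL

variable {n : ℕ}

/-- `below v u` : `u` lies (weakly) below `v` in the tree. -/
def below (v u : Wvertex 2 n) : Prop :=
  v.1.1 <+: u.1.1 ∧ (v.1.1 = u.1.1 → v.1.2 ≤ u.1.2)

instance : ∀ v u : Wvertex 2 n, Decidable (below v u) := fun v u => by
  unfold below; infer_instance

lemma below_refl (v : Wvertex 2 n) : below v v := ⟨List.prefix_refl _, fun _ => le_rfl⟩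

lemma below_trans {v u w : Wvertex 2 n} (h1 : below v u) (h2 : below u w) : below v w := by
  refine ⟨h1.1.trans h2.1, fun hl => ?_⟩
  have hlen : w.1.1.length ≤ v.1.1.length := le_of_eq (congrArg List.length hl.symm)
  have h3 : v.1.1 = u.1.1 :=
    h1.1.eq_of_length_le (h2.1.length_le.trans hlen)
  have h4 : u.1.1 = w.1.1 := h2.1.eq_of_length_le (by rw [← h3, hl])
  exact (h1.2 h3).trans (h2.2 h4)

def wdl (n t : ℕ) : ℕ := ∑ i ∈ Finset.range t, 2 ^ (n - (i + 1))

lemma wdepth_eq (l : List Bool) : wdepth 2 n l = wdl n l.length := rfl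

lemma wdl_mono {t t' : ℕ} (h : t ≤ t') : wdl n t ≤ wdl n t' :=
  Finset.sum_le_sum_of_subset (Finset.range_subset_range.2 h)

lemma wdl_succ (t : ℕ) : wdl n (t + 1) = wdl n t + 2 ^ (n - (t + 1)) :=
  Finset.sum_range_succ _ _

lemma wdl_add (t : ℕ) (ht : t ≤ n) : wdl n t + 2 ^ (n - t) = 2 ^ n := by
  induction t with
  | zero => simp [wdl]
  | succ t ih =>
    have ht' : t ≤ n := by omega
    have h1 : 2 ^ (n - t) = 2 ^ (n - (t+1)) + 2 ^ (n - (t+1)) := by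
      rw [show n - t = (n - (t+1)) + 1 by omega, pow_succ]; ring
    have h2 := wdl_succ (n := n) t
    have h3 := ih ht'
    generalize 2 ^ (n - t) = A at *
    generalize 2 ^ (n - (t+1)) = B at *
    generalize 2 ^ n = C at *
    omega

lemma wdl_le_pow (t : ℕ) (ht : t ≤ n) : wdl n t ≤ 2 ^ n :=
  Nat.le.intro (wdl_add t ht)

lemma wheight_def (l : List Bool) (r : ℕ) (h : WCond 2 n (l, r)) :
    wheight 2 n ⟨(l, r), h⟩ = wdl n l.dropLast.length + r := rfl

lemma length_dropLast' (l : List Bool) : l.dropLast.length = l.length - 1 := by simp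

/-- Strict monotonicity of height along `below`. -/
lemma wheight_lt {v u : Wvertex 2 n} (h : below v u) (hne : v ≠ u) :
    wheight 2 n v < wheight 2 n u := by
  obtain ⟨⟨l, r⟩, hv⟩ := v
  obtain ⟨⟨m, s⟩, hu⟩ := u
  rw [wheight_def, wheight_def, length_dropLast', length_dropLast']
  by_cases hl : l = m
  · subst hl
    have hr : r ≠ s := fun h' => hne (by subst h'; rfl)
    have h2 := h.2 rfl
    simp only at h2
    have : r < s := lt_of_le_of_ne h2 hr
    omega
  · -- proper prefix
    have hpre : l <+: m := h.1
    have hlen : l.length < m.length := by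
      rcases Nat.lt_or_ge l.length m.length with h' | h'
      · exact h'
      · exact absurd (hpre.eq_of_length_le h') hl
    have hmnil : m ≠ [] := by rintro rfl; simp at hlen
    have hs : 1 ≤ s := (hu.2.2.2 hmnil).1
    by_cases hnil : l = []
    · subst hnil
      have hr0 : r = 0 := hv.2.2.1 rfl
      have h9 : wdl n ([] : List Bool).length = 0 := rfl
      have h8 : ((0:ℕ) - 1) = 0 := rfl
      have h7 : wdl n (0 - 1) = 0 := rfl
      simp only [hr0, List.length_nil]
      omega
    · have hrb : r ≤ 2 ^ (n - l.length) := (hv.2.2.2 hnil).2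
      have hll : 1 ≤ l.length := List.length_pos_iff.2 hnil
      have hstep : wdl n l.length = wdl n (l.length - 1) + 2 ^ (n - l.length) := by
        have h2 := wdl_succ (n := n) (l.length - 1)
        rw [show l.length - 1 + 1 = l.length by omega] at h2
        exact h2
      have h2 : wdl n l.length ≤ wdl n (m.length - 1) := wdl_mono (by omega)
      generalize 2 ^ (n - l.length) = A at *
      omega

lemma below_antisymm {v u : Wvertex 2 n} (h1 : below v u) (h2 : wheight 2 n v = wheight 2 n u) :
    v = u := by
  by_contra hne
  exact absurd h2 (Nat.ne_of_lt (wheight_lt h1 hne))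

/-- two ancestors of a common vertex are comparable. -/
lemma below_total {v b a : Wvertex 2 n} (h1 : below v a) (h2 : below b a) :
    below v b ∨ below b v := by
  rcases List.prefix_or_prefix_of_prefix h1.1 h2.1 with h | h
  · by_cases he : v.1.1 = b.1.1
    · rcases le_total v.1.2 b.1.2 with h' | h'
      · exact Or.inl ⟨he ▸ List.prefix_refl _, fun _ => h'⟩
      · exact Or.inr ⟨he.symm ▸ List.prefix_refl _, fun _ => h'⟩
    · exact Or.inl ⟨h, fun h' => absurd h' he⟩
  · by_cases he : b.1.1 = v.1.1
    · rcases le_total v.1.2 b.1.2 with h' | h'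
      · exact Or.inl ⟨he.symm ▸ List.prefix_refl _, fun _ => h'⟩
      · exact Or.inr ⟨he ▸ List.prefix_refl _, fun _ => h'⟩
    · exact Or.inr ⟨h, fun h' => absurd h' he⟩

end HCL

namespace HCL
variable {n : ℕ}

lemma cp_spec : ∀ l m : List Bool,
    commonPrefix l m <+: l ∧ commonPrefix l m <+: m ∧ (commonPrefix l m = l → l <+: m)
  | [], m => by simp [commonPrefix]
  | a::as, [] => by
      constructor
      · show commonPrefix (a::as) [] <+: _
        simp [commonPrefix]
      · constructor
        · show commonPrefix (a::as) [] <+: _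
          simp [commonPrefix]
        · intro h
          exact absurd h.symm (by simp [commonPrefix])
  | a::as, b::bs => by
      by_cases h : a = b
      · subst h
        have ih := cp_spec as bs
        simp only [commonPrefix, if_pos rfl]
        refine ⟨List.cons_prefix_cons.2 ⟨rfl, ih.1⟩, List.cons_prefix_cons.2 ⟨rfl, ih.2.1⟩, ?_⟩
        intro heq
        have : commonPrefix as bs = as := by
          injection heq
        exact List.cons_prefix_cons.2 ⟨rfl, ih.2.2 this⟩
      · simp only [commonPrefix, if_neg h]
        refine ⟨List.nil_prefix, List.nil_prefix, fun heq => absurd heq.symm (by simp)⟩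

/-- Structure of adjacent vertices: one is directly below the other. -/
lemma adj_structure {a b : Wvertex 2 n} (hne : a ≠ b) (h1 : Wdist 2 n a b = 1) :
    (below a b ∧ wheight 2 n b = wheight 2 n a + 1) ∨
      (below b a ∧ wheight 2 n a = wheight 2 n b + 1) := by
  unfold Wdist at h1
  by_cases hp : (a.1.1.isPrefixOf b.1.1 ∨ b.1.1.isPrefixOf a.1.1 : Prop)
  · rw [if_pos hp] at h1
    have hcomp : below a b ∨ below b a := by
      rcases hp with hp | hp
      · rw [List.isPrefixOf_iff_prefix] at hp
        by_cases he : a.1.1 = b.1.1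
        · rcases le_total a.1.2 b.1.2 with h' | h'
          · exact Or.inl ⟨he ▸ List.prefix_refl _, fun _ => h'⟩
          · exact Or.inr ⟨he.symm ▸ List.prefix_refl _, fun _ => h'⟩
        · exact Or.inl ⟨hp, fun h' => absurd h' he⟩
      · rw [List.isPrefixOf_iff_prefix] at hp
        by_cases he : b.1.1 = a.1.1
        · rcases le_total a.1.2 b.1.2 with h' | h'
          · exact Or.inl ⟨he ▸ List.prefix_refl _, fun _ => h'⟩
          · exact Or.inr ⟨he.symm ▸ List.prefix_refl _, fun _ => h'⟩
        · exact Or.inr ⟨hp, fun h' => absurd h' he⟩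
    rcases hcomp with hc | hc
    · left
      have hlt := wheight_lt hc hne
      refine ⟨hc, ?_⟩
      rw [max_eq_right hlt.le, min_eq_left hlt.le] at h1
      omega
    · right
      have hlt := wheight_lt hc (Ne.symm hne)
      refine ⟨hc, ?_⟩
      rw [max_eq_left hlt.le, min_eq_right hlt.le] at h1
      omega
  · rw [if_neg hp] at h1
    exfalso
    push_neg at hp
    obtain ⟨hp1, hp2⟩ := hp
    have hnp1 : ¬ a.1.1 <+: b.1.1 := fun h => hp1 (List.isPrefixOf_iff_prefix.2 h)
    have hnp2 : ¬ b.1.1 <+: a.1.1 := fun h => hp2 (List.isPrefixOf_iff_prefix.2 h)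
    have hanil : a.1.1 ≠ [] := fun h => hnp1 (h ▸ List.nil_prefix)
    have hbnil : b.1.1 ≠ [] := fun h => hnp2 (h ▸ List.nil_prefix)
    have hra : 1 ≤ a.1.2 := (a.2.2.2.2 hanil).1
    have hrb : 1 ≤ b.1.2 := (b.2.2.2.2 hbnil).1
    have hspec := cp_spec a.1.1 b.1.1
    generalize hc : commonPrefix a.1.1 b.1.1 = c at h1 hspec
    have hca : c.length < a.1.1.length := by
      have hle := hspec.1.length_le
      rcases lt_or_eq_of_le hle with h' | h'
      · exact h'
      · exact absurd (hspec.2.2 (hspec.1.eq_of_length_le h'.ge)) hnp1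
    have hcb : c.length ≤ b.1.1.length - 1 := by
      have hle := hspec.2.1.length_le
      have hbl : 1 ≤ b.1.1.length := List.length_pos_iff.2 hbnil
      rcases lt_or_eq_of_le hle with h' | h'
      · omega
      · exfalso
        have : c = b.1.1 := hspec.2.1.eq_of_length_le h'.ge
        exact hnp2 (this ▸ hspec.1)
    have hha : wheight 2 n a ≥ wdepth 2 n c + 1 := by
      obtain ⟨⟨l, r⟩, hv⟩ := a
      rw [wheight_def, length_dropLast']
      rw [wdepth_eq]
      have := wdl_mono (n := n) (show c.length ≤ l.length - 1 by
        simp only at hca; omega)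
      simp only at hra ⊢
      omega
    have hhb : wheight 2 n b ≥ wdepth 2 n c + 1 := by
      obtain ⟨⟨l, r⟩, hv⟩ := b
      rw [wheight_def, length_dropLast']
      rw [wdepth_eq]
      have := wdl_mono (n := n) (show c.length ≤ l.length - 1 by
        simp only at hcb; omega)
      simp only at hrb ⊢
      omega
    omega

end HCL

namespace HCL
variable {n : ℕ}

lemma cross_unique {a b v : Wvertex 2 n} (hadj : (WGraph 2 n).Adj a b)
    (hin : below v a) (hout : ¬ below v b) : v = a := by
  obtain ⟨hne, hd1, _⟩ : a ≠ b ∧ Wdist 2 n a b = 1 ∧ Wdist 2 n b a = 1 := hadj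
  rcases adj_structure hne hd1 with ⟨hab, hh⟩ | ⟨hba, hh⟩
  · exact absurd (below_trans hin hab) hout
  · rcases below_total hin hba with h | h
    · exact absurd h hout
    · by_contra hva
      have h1 := wheight_lt hin hva
      have h2 : b ≠ v := by rintro rfl; exact hout (below_refl _)
      have h3 := wheight_lt h h2
      omega

lemma cross_eq {a b v v' : Wvertex 2 n} (hadj : (WGraph 2 n).Adj a b)
    (hx : ¬(below v a ↔ below v b)) (hx' : ¬(below v' a ↔ below v' b)) : v = v' := by
  have hcomp : below a b ∨ below b a := by
    obtain ⟨hne, hd1, _⟩ : a ≠ b ∧ Wdist 2 n a b = 1 ∧ Wdist 2 n b a = 1 := hadj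
    rcases adj_structure hne hd1 with ⟨hab, _⟩ | ⟨hba, _⟩
    · exact Or.inl hab
    · exact Or.inr hba
  have key : ∀ w : Wvertex 2 n, ¬(below w a ↔ below w b) →
      (¬ below w b ∧ w = a) ∨ (¬ below w a ∧ w = b) := by
    intro w hw
    by_cases h1 : below w a
    · have h2 : ¬ below w b := fun h => hw ⟨fun _ => h, fun _ => h1⟩
      exact Or.inl ⟨h2, cross_unique hadj h1 h2⟩
    · have h2 : below w b := by
        by_contra h2
        exact hw ⟨fun h => absurd h h1, fun h => absurd h h2⟩
      exact Or.inr ⟨h1, cross_unique hadj.symm h2 h1⟩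
  rcases key v hx with ⟨hv1, hva⟩ | ⟨hv1, hvb⟩ <;>
    rcases key v' hx' with ⟨hv2, h2a⟩ | ⟨hv2, h2b⟩
  · exact hva.trans h2a.symm
  · exfalso
    rw [hva] at hv1
    rw [h2b] at hv2
    rcases hcomp with h | h
    · exact hv1 h
    · exact hv2 h
  · exfalso
    rw [hvb] at hv1
    rw [h2a] at hv2
    rcases hcomp with h | h
    · exact hv2 h
    · exact hv1 h
  · exact hvb.trans h2b.symm

section counting

variable {V : Type*} [DecidableEq V] {G : SimpleGraph V}

/-- toggle step at `u`. -/
def isT (u : V) (d : (Lam G).Dart) : Bool :=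
  decide (d.fst.1 ≠ d.snd.1 ∧ d.fst.2 = u)

/-- crossing step for the cut below `v`. -/
def isC {n : ℕ} (v : Wvertex 2 n) (d : (Lam (WGraph 2 n)).Dart) : Bool :=
  decide (d.fst.1 = d.snd.1 ∧ ¬ (below v d.fst.2 ↔ below v d.snd.2))

lemma toggle_mem {P Q : Finset V × V} (p : (Lam G).Walk P Q) (u : V)
    (h : p.darts.countP (isT u) = 0) : (u ∈ P.1 ↔ u ∈ Q.1) := by
  induction p with
  | nil => rfl
  | cons hadj q ih =>
    rename_i P R Q'
    rw [SimpleGraph.Walk.darts_cons, List.countP_cons] at h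
    have h0 : q.darts.countP (isT u) = 0 := by omega
    have h1 : ¬ (P.1 ≠ R.1 ∧ P.2 = u) := by
      intro hx
      have : isT u (⟨(P, R), hadj⟩ : (Lam G).Dart) = true := decide_eq_true hx
      rw [this] at h
      simp at h
    refine Iff.trans ?_ (ih h0)
    rcases hadj with ⟨he, _⟩ | ⟨he, hs⟩
    · rw [he]
    · have hne : P.1 ≠ R.1 := by
        intro h'
        rw [h', symmDiff_self] at hs
        exact Finset.singleton_ne_empty _ hs.symm
      have hu : P.2 ≠ u := fun h' => h1 ⟨hne, h'⟩
      have hmem : u ∉ P.1 ∆ R.1 := by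
        rw [hs, Finset.mem_singleton]; exact fun h' => hu h'.symm
      rw [Finset.mem_symmDiff] at hmem
      push_neg at hmem
      exact ⟨hmem.1, hmem.2⟩

lemma cross_b2 {P Q : Finset (Wvertex 2 n) × Wvertex 2 n}
    (p : (Lam (WGraph 2 n)).Walk P Q) (v : Wvertex 2 n)
    (hin : below v P.2) (hout : ¬ below v Q.2) : 1 ≤ p.darts.countP (isC v) := by
  induction p with
  | nil => exact absurd hin hout
  | cons hadj q ih =>
    rename_i P R Q'
    rw [SimpleGraph.Walk.darts_cons, List.countP_cons]
    by_cases hc : isC v (⟨(P, R), hadj⟩ : (Lam (WGraph 2 n)).Dart) = true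
    · simp [hc]
    · have hcc : ¬ (P.1 = R.1 ∧ ¬ (below v P.2 ↔ below v R.2)) := fun hx =>
        hc (decide_eq_true hx)
      have hR : below v R.2 := by
        rcases hadj with ⟨he, _⟩ | ⟨he, _⟩
        · push_neg at hcc
          exact (hcc he).1 hin
        · rw [← he]; exact hin
      exact le_trans (ih hR hout) (Nat.le_add_right _ _)

lemma cross_main {P Q : Finset (Wvertex 2 n) × Wvertex 2 n}
    (p : (Lam (WGraph 2 n)).Walk P Q) (v : Wvertex 2 n)
    (hP : ¬ below v P.2) (hQ : ¬ below v Q.2)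
    (hT : 1 ≤ p.darts.countP (isT v)) : 2 ≤ p.darts.countP (isC v) := by
  induction p with
  | nil => simp at hT
  | cons hadj q ih =>
    rename_i P R Q'
    rw [SimpleGraph.Walk.darts_cons, List.countP_cons] at hT ⊢
    by_cases hc : isC v (⟨(P, R), hadj⟩ : (Lam (WGraph 2 n)).Dart) = true
    · -- crossing step: the rest has at least one more crossing
      have hcc : P.1 = R.1 ∧ ¬ (below v P.2 ↔ below v R.2) := of_decide_eq_true hc
      have hR : below v R.2 := by
        by_contra h'
        exact hcc.2 ⟨fun h => absurd h hP, fun h => absurd h h'⟩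
      have := cross_b2 q v hR hQ
      rw [if_pos hc]
      omega
    · -- not crossing
      have hcc : ¬ (P.1 = R.1 ∧ ¬ (below v P.2 ↔ below v R.2)) := fun hx =>
        hc (decide_eq_true hx)
      have hd : isT v (⟨(P, R), hadj⟩ : (Lam (WGraph 2 n)).Dart) = false := by
        rw [isT, decide_eq_false_iff_not]
        rintro ⟨h1, h2⟩
        exact hP (h2 ▸ below_refl v)
      have hR : ¬ below v R.2 := by
        rcases hadj with ⟨he, _⟩ | ⟨he, _⟩
        · push_neg at hcc
          intro h'
          exact hP ((hcc he).2 h')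
        · rw [← he]; exact hP
      rw [hd] at hT
      simp only [Bool.false_eq_true, if_false, add_zero] at hT
      have := ih hR hQ hT
      omega

/-- counting pairwise-exclusive predicates on a list. -/
lemma sum_countP_le {α : Type*} {ι : Type*} [DecidableEq ι] (I : Finset ι) (f : ι → α → Bool)
    (hdisj : ∀ a : α, (I.filter (fun i => f i a)).card ≤ 1) (L : List α) :
    ∑ i ∈ I, L.countP (f i) ≤ L.length := by
  induction L with
  | nil => simp
  | cons a L ih =>
    simp only [List.countP_cons, List.length_cons]
    rw [Finset.sum_add_distrib]
    have h1 : ∑ i ∈ I, (if f i a then 1 else 0) = (I.filter (fun i => f i a)).card := by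
      rw [Finset.card_filter]
    have := hdisj a
    omega

end counting
end HCL

namespace HCL
variable {n : ℕ}

lemma not_below_root {u : Wvertex 2 n} (h : u ≠ Wroot 2 n) : ¬ below u (Wroot 2 n) := by
  rintro ⟨h1, h2⟩
  have hnil : u.1.1 = [] := List.prefix_nil.1 h1
  have hr : u.1.2 = 0 := u.2.2.2.1 hnil
  apply h
  apply Subtype.ext
  rw [show (Wroot 2 n).1 = (([] : List Bool), 0) from rfl]
  rw [← hnil, ← hr]

lemma walk_lower {A B : Finset (Wvertex 2 n)} (hroot : Wroot 2 n ∉ A ∆ B)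
    (p : (Lam (WGraph 2 n)).Walk (A, Wroot 2 n) (B, Wroot 2 n)) :
    3 * (A ∆ B).card ≤ p.length := by
  classical
  set S := A ∆ B with hS
  set f : Wvertex 2 n × Bool → (Lam (WGraph 2 n)).Dart → Bool :=
    fun i d => if i.2 then isC i.1 d else isT i.1 d with hf
  have hdisj : ∀ d : (Lam (WGraph 2 n)).Dart,
      ((S ×ˢ (Finset.univ : Finset Bool)).filter (fun i => f i d)).card ≤ 1 := by
    intro d
    rw [Finset.card_le_one]
    intro i hi j hj
    rw [Finset.mem_filter] at hi hj
    have hi2 := hi.2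
    have hj2 := hj.2
    rcases d.adj with ⟨he, hm⟩ | ⟨he, hs⟩
    · -- move step
      have key : ∀ x : Wvertex 2 n × Bool, f x d = true →
          (x.2 = true ∧ ¬ (below x.1 d.fst.2 ↔ below x.1 d.snd.2)) := by
        intro x hx
        replace hx : (if x.2 = true then isC x.1 d else isT x.1 d) = true := hx
        by_cases h2 : x.2 = true
        · rw [h2, if_pos rfl] at hx
          have := of_decide_eq_true hx
          exact ⟨h2, this.2⟩
        · rw [Bool.not_eq_true] at h2
          rw [h2, if_neg Bool.false_ne_true] at hx
          have := of_decide_eq_true hx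
          exact absurd he this.1
      obtain ⟨hib, hix⟩ := key i hi2
      obtain ⟨hjb, hjx⟩ := key j hj2
      have := cross_eq hm hix hjx
      exact Prod.ext this (hib.trans hjb.symm)
    · -- toggle step
      have hne : d.fst.1 ≠ d.snd.1 := by
        intro h'
        rw [h', symmDiff_self] at hs
        exact Finset.singleton_ne_empty _ hs.symm
      have key : ∀ x : Wvertex 2 n × Bool, f x d = true →
          (x.2 = false ∧ x.1 = d.fst.2) := by
        intro x hx
        replace hx : (if x.2 = true then isC x.1 d else isT x.1 d) = true := hx
        by_cases h2 : x.2 = true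
        · rw [h2, if_pos rfl] at hx
          exact absurd (of_decide_eq_true hx).1 hne
        · rw [Bool.not_eq_true] at h2
          rw [h2, if_neg Bool.false_ne_true] at hx
          exact ⟨h2, (of_decide_eq_true hx).2.symm⟩
      obtain ⟨hib, hix⟩ := key i hi2
      obtain ⟨hjb, hjx⟩ := key j hj2
      exact Prod.ext (hix.trans hjx.symm) (hib.trans hjb.symm)
  have hmain := sum_countP_le (S ×ˢ (Finset.univ : Finset Bool)) f hdisj p.darts
  rw [Finset.sum_product] at hmain
  have hsum : ∀ u ∈ S, 3 ≤ ∑ b ∈ (Finset.univ : Finset Bool), p.darts.countP (f (u, b)) := by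
    intro u hu
    rw [Fintype.sum_bool]
    have hfT : f (u, false) = isT u := rfl
    have hfC : f (u, true) = isC u := rfl
    have hune : u ≠ Wroot 2 n := fun h => hroot (h ▸ hu)
    have hT : 1 ≤ p.darts.countP (isT u) := by
      by_contra h'
      have h0 : p.darts.countP (isT u) = 0 := by omega
      have := toggle_mem p u h0
      rw [hS, Finset.mem_symmDiff] at hu
      simp only at this
      tauto
    have hC : 2 ≤ p.darts.countP (isC u) := by
      apply cross_main p u (not_below_root hune) (not_below_root hune)
      exact hT
    rw [hfT, hfC]
    omega
  have h3 : ∑ u ∈ S, 3 ≤ ∑ u ∈ S, ∑ b ∈ (Finset.univ : Finset Bool),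
      p.darts.countP (f (u, b)) := Finset.sum_le_sum hsum
  rw [Finset.sum_const, smul_eq_mul] at h3
  rw [← SimpleGraph.Walk.length_darts p]
  omega

end HCL

namespace HCL
variable {n : ℕ}

section dle
variable {V : Type*} (G : SimpleGraph V)

/-- there is a walk of length at most `c`. -/
def dle (u v : V) (c : ℕ) : Prop := ∃ p : G.Walk u v, p.length ≤ c

variable {G}

lemma dle_refl (u : V) : dle G u u 0 := ⟨SimpleGraph.Walk.nil, le_rfl⟩

lemma dle_trans {u v w : V} {a b : ℕ} (h1 : dle G u v a) (h2 : dle G v w b) :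
    dle G u w (a + b) := by
  obtain ⟨p, hp⟩ := h1
  obtain ⟨q, hq⟩ := h2
  exact ⟨p.append q, by rw [SimpleGraph.Walk.length_append]; omega⟩

lemma dle_of_adj {u v : V} (h : G.Adj u v) : dle G u v 1 := ⟨h.toWalk, le_rfl⟩

lemma dle_symm {u v : V} {a : ℕ} (h : dle G u v a) : dle G v u a := by
  obtain ⟨p, hp⟩ := h
  exact ⟨p.reverse, by rwa [SimpleGraph.Walk.length_reverse]⟩

lemma dle_mono {u v : V} {a b : ℕ} (h : dle G u v a) (hab : a ≤ b) : dle G u v b :=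
  h.imp (fun _ h' => h'.trans hab)

lemma dle_dist {u v : V} {a : ℕ} (h : dle G u v a) : G.dist u v ≤ a := by
  obtain ⟨p, hp⟩ := h
  exact le_trans (SimpleGraph.dist_le p) hp

lemma dle_reachable {u v : V} {a : ℕ} (h : dle G u v a) : G.Reachable u v := by
  obtain ⟨p, _⟩ := h
  exact ⟨p⟩

end dle

/-- vertex on the subdivided edge into node `l`, at distance `r` below the parent node. -/
def ptv (n : ℕ) (l : List Bool) (r : ℕ) : Wvertex 2 n :=
  if h : WCond 2 n (l, r) then ⟨(l, r), h⟩ else Wroot 2 n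

/-- the node with address `l`. -/
def nodev (n : ℕ) (l : List Bool) : Wvertex 2 n :=
  ptv n l (if l = [] then 0 else 2 ^ (n - l.length))

lemma wcond_mk {l : List Bool} {r : ℕ} (hl : l ≠ []) (hln : l.length ≤ n)
    (h1 : 1 ≤ r) (h2 : r ≤ 2 ^ (n - l.length)) : WCond 2 n (l, r) := by
  refine ⟨hln, h2.trans (Nat.pow_le_pow_right (by norm_num) (by omega)), fun h => absurd h hl,
    fun _ => ⟨h1, h2⟩⟩

lemma ptv_mk {l : List Bool} {r : ℕ} (h : WCond 2 n (l, r)) :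
    ptv n l r = ⟨(l, r), h⟩ := by
  unfold ptv; exact dif_pos h

lemma ptv_val {l : List Bool} {r : ℕ} (h : WCond 2 n (l, r)) :
    (ptv n l r).1 = (l, r) := by rw [ptv_mk h]

lemma wheight_ptv {l : List Bool} {r : ℕ} (h : WCond 2 n (l, r)) :
    wheight 2 n (ptv n l r) = wdl n l.dropLast.length + r := by
  rw [ptv_mk h, wheight_def]

lemma nodev_nil : nodev n [] = Wroot 2 n := by
  have h : WCond 2 n (([] : List Bool), 0) := ⟨by simp, by simp, fun _ => rfl, fun h => absurd rfl h⟩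
  rw [nodev, if_pos rfl, ptv_mk h]
  rfl

lemma wcond_node {l : List Bool} (hl : l ≠ []) (hln : l.length ≤ n) :
    WCond 2 n (l, 2 ^ (n - l.length)) :=
  wcond_mk hl hln (Nat.one_le_two_pow) le_rfl

lemma nodev_val {l : List Bool} (hl : l ≠ []) (hln : l.length ≤ n) :
    (nodev n l).1 = (l, 2 ^ (n - l.length)) := by
  rw [nodev, if_neg hl, ptv_val (wcond_node hl hln)]

lemma wheight_nodev {l : List Bool} (hln : l.length ≤ n) :
    wheight 2 n (nodev n l) = wdl n l.length := by
  by_cases hl : l = []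
  · subst hl
    rw [nodev_nil]
    rfl
  · rw [nodev, if_neg hl, wheight_ptv (wcond_node hl hln), length_dropLast']
    have h1 : 1 ≤ l.length := List.length_pos_iff.2 hl
    have := wdl_succ (n := n) (l.length - 1)
    rw [show l.length - 1 + 1 = l.length by omega] at this
    omega

lemma nodev_fst {l : List Bool} (hln : l.length ≤ n) : (nodev n l).1.1 = l := by
  by_cases hl : l = []
  · rw [hl, nodev_nil]; rfl
  · rw [nodev_val hl hln]

/-- adjacency from prefix and height difference 1. -/
lemma adj_of_prefix_height {a b : Wvertex 2 n} (h : a.1.1 <+: b.1.1)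
    (hh : wheight 2 n b = wheight 2 n a + 1) : (WGraph 2 n).Adj a b := by
  have hne : a ≠ b := fun e => by rw [e] at hh; omega
  have hpp : (a.1.1.isPrefixOf b.1.1 ∨ b.1.1.isPrefixOf a.1.1 : Prop) :=
    Or.inl (List.isPrefixOf_iff_prefix.2 h)
  have hpp' : (b.1.1.isPrefixOf a.1.1 ∨ a.1.1.isPrefixOf b.1.1 : Prop) :=
    Or.inr (List.isPrefixOf_iff_prefix.2 h)
  refine (show a ≠ b ∧ Wdist 2 n a b = 1 ∧ Wdist 2 n b a = 1 from ⟨hne, ?_, ?_⟩)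
  · unfold Wdist
    rw [if_pos hpp]
    omega
  · unfold Wdist
    rw [if_pos hpp']
    omega

/-- step down along a subdivided edge. -/
lemma adj_step {l : List Bool} {r : ℕ} (hl : l ≠ []) (hln : l.length ≤ n)
    (h1 : 1 ≤ r) (h2 : r + 1 ≤ 2 ^ (n - l.length)) :
    (WGraph 2 n).Adj (ptv n l r) (ptv n l (r + 1)) := by
  have hc1 : WCond 2 n (l, r) := wcond_mk hl hln h1 (by omega)
  have hc2 : WCond 2 n (l, r + 1) := wcond_mk hl hln (by omega) h2
  apply adj_of_prefix_height
  · rw [ptv_mk hc1, ptv_mk hc2]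
  · rw [wheight_ptv hc1, wheight_ptv hc2]
    omega

/-- step from the parent node onto a subdivided edge. -/
lemma adj_top {l : List Bool} (hl : l ≠ []) (hln : l.length ≤ n) :
    (WGraph 2 n).Adj (nodev n l.dropLast) (ptv n l 1) := by
  have hdln : l.dropLast.length ≤ n := by rw [length_dropLast']; omega
  have hc1 : WCond 2 n (l, 1) := wcond_mk hl hln le_rfl Nat.one_le_two_pow
  apply adj_of_prefix_height
  · rw [nodev_fst hdln, ptv_mk hc1]
    exact List.dropLast_prefix l
  · rw [wheight_nodev hdln, wheight_ptv hc1]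

/-- toggling a lamp in the lamplighter graph. -/
lemma lam_adj_toggle {V : Type*} [DecidableEq V] {G : SimpleGraph V}
    (A : Finset V) (u : V) : (Lam G).Adj (A, u) (A ∆ {u}, u) := by
  refine Or.inr ⟨rfl, ?_⟩
  rw [symmDiff_symmDiff_cancel_left]

lemma lam_adj_move {V : Type*} [DecidableEq V] {G : SimpleGraph V}
    (A : Finset V) {u v : V} (h : G.Adj u v) : (Lam G).Adj (A, u) (A, v) :=
  Or.inl ⟨rfl, h⟩

end HCL

namespace HCL
variable {n : ℕ}

/-- all vertices on or below the subdivided edge into node `l`. -/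
noncomputable def Pset (n : ℕ) (l : List Bool) : Finset (Wvertex 2 n) :=
  Finset.univ.filter (fun u => l <+: u.1.1)

/-- the vertices of the subdivided edge into node `l` (excluding the parent node). -/
noncomputable def eSet (n : ℕ) (l : List Bool) : Finset (Wvertex 2 n) :=
  Finset.univ.filter (fun u => u.1.1 = l)

noncomputable def eUpTo (n : ℕ) (l : List Bool) (r : ℕ) : Finset (Wvertex 2 n) :=
  Finset.univ.filter (fun u => u.1.1 = l ∧ u.1.2 ≤ r)

lemma mem_Pset {l : List Bool} {u : Wvertex 2 n} : u ∈ Pset n l ↔ l <+: u.1.1 := by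
  rw [Pset, Finset.mem_filter]
  simp

lemma mem_eSet {l : List Bool} {u : Wvertex 2 n} : u ∈ eSet n l ↔ u.1.1 = l := by
  rw [eSet, Finset.mem_filter]
  simp

lemma mem_eUpTo {l : List Bool} {r : ℕ} {u : Wvertex 2 n} :
    u ∈ eUpTo n l r ↔ u.1.1 = l ∧ u.1.2 ≤ r := by
  rw [eUpTo, Finset.mem_filter]
  simp

lemma eUpTo_zero {l : List Bool} (hl : l ≠ []) : eUpTo n l 0 = ∅ := by
  ext u
  rw [mem_eUpTo]
  simp only [Finset.notMem_empty, iff_false]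
  rintro ⟨h1, h2⟩
  have := (u.2.2.2.2 (h1 ▸ hl)).1
  omega

lemma eUpTo_succ {l : List Bool} {r : ℕ} (hl : l ≠ []) (hln : l.length ≤ n)
    (hr : r + 1 ≤ 2 ^ (n - l.length)) :
    eUpTo n l (r + 1) = insert (ptv n l (r + 1)) (eUpTo n l r) := by
  have hc : WCond 2 n (l, r + 1) := wcond_mk hl hln (by omega) hr
  ext u
  rw [mem_eUpTo, Finset.mem_insert, mem_eUpTo]
  constructor
  · rintro ⟨h1, h2⟩
    rcases Nat.lt_or_ge u.1.2 (r + 1) with h' | h'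
    · exact Or.inr ⟨h1, by omega⟩
    · left
      apply Subtype.ext
      rw [ptv_val hc]
      rw [Prod.ext_iff]
      exact ⟨h1, by omega⟩
  · rintro (h | ⟨h1, h2⟩)
    · rw [h, ptv_val hc]
      exact ⟨rfl, le_rfl⟩
    · exact ⟨h1, by omega⟩

lemma ptv_not_mem_eUpTo {l : List Bool} {r : ℕ} (hc : WCond 2 n (l, r + 1)) :
    ptv n l (r + 1) ∉ eUpTo n l r := by
  rw [mem_eUpTo, ptv_val hc]
  rintro ⟨-, h⟩
  omega

lemma eUpTo_full {l : List Bool} (hl : l ≠ []) (hln : l.length ≤ n) :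
    eUpTo n l (2 ^ (n - l.length)) = eSet n l := by
  ext u
  rw [mem_eUpTo, mem_eSet]
  constructor
  · exact fun h => h.1
  · intro h
    have h2 := (u.2.2.2.2 (by rw [h]; exact hl)).2
    rw [h] at h2
    exact ⟨h, h2⟩

lemma prefix_cases {l m : List Bool} (h : l <+: m) :
    m = l ∨ (l ++ [false]) <+: m ∨ (l ++ [true]) <+: m := by
  obtain ⟨t, rfl⟩ := h
  cases t with
  | nil => exact Or.inl (by simp)
  | cons b t' =>
    cases b
    · refine Or.inr (Or.inl ⟨t', ?_⟩)
      simp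
    · refine Or.inr (Or.inr ⟨t', ?_⟩)
      simp

lemma Pset_leaf {l : List Bool} (hln : l.length = n) : Pset n l = eSet n l := by
  ext u
  rw [mem_Pset, mem_eSet]
  constructor
  · intro h
    exact (h.eq_of_length_le (by rw [hln]; exact u.2.1)).symm
  · intro h
    rw [h]

lemma Pset_split {l : List Bool} (hln : l.length < n) :
    Pset n l = eSet n l ∪ (Pset n (l ++ [false]) ∪ Pset n (l ++ [true])) := by
  ext u
  rw [Finset.mem_union, Finset.mem_union, mem_Pset, mem_eSet, mem_Pset, mem_Pset]
  constructor
  · intro h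
    rcases prefix_cases h with h | h | h
    · exact Or.inl h
    · exact Or.inr (Or.inl h)
    · exact Or.inr (Or.inr h)
  · rintro (h | h | h)
    · rw [h]
    · exact ((List.prefix_append l [false]).trans h)
    · exact ((List.prefix_append l [true]).trans h)

lemma eSet_disj_Pset {l : List Bool} (b : Bool) :
    Disjoint (eSet n l) (Pset n (l ++ [b])) := by
  rw [Finset.disjoint_left]
  intro u hu hv
  rw [mem_eSet] at hu
  rw [mem_Pset, hu] at hv
  have := hv.length_le
  simp at this

lemma Pset_disj {l m : List Bool} (hlm : l.length = m.length) (hne : l ≠ m) :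
    Disjoint (Pset n l) (Pset n m) := by
  rw [Finset.disjoint_left]
  intro u hu hv
  rw [mem_Pset] at hu hv
  rcases List.prefix_or_prefix_of_prefix hu hv with h | h
  · exact hne (h.eq_of_length_le (le_of_eq hlm.symm))
  · exact hne ((h.eq_of_length_le (le_of_eq hlm)).symm)

lemma card_eSet {l : List Bool} (hl : l ≠ []) (hln : l.length ≤ n) :
    (eSet n l).card = 2 ^ (n - l.length) := by
  rw [show (eSet n l).card = (Finset.Icc 1 (2 ^ (n - l.length))).card from ?_, Nat.card_Icc]
  · simp
  · apply Finset.card_bij' (fun u _ => u.1.2) (fun r hr => ptv n l r)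
    · intro u hu
      rw [mem_eSet] at hu
      have h2 := u.2.2.2.2 (by rw [hu]; exact hl)
      rw [hu] at h2
      rw [Finset.mem_Icc]
      exact h2
    · intro r hr
      rw [Finset.mem_Icc] at hr
      rw [mem_eSet, ptv_val (wcond_mk hl hln hr.1 hr.2)]
    · intro u hu
      rw [mem_eSet] at hu
      have hc : WCond 2 n (l, u.1.2) := by
        rw [← hu, Prod.mk.eta]
        exact u.2
      apply Subtype.ext
      rw [ptv_val hc, ← hu, Prod.mk.eta]
    · intro r hr
      rw [Finset.mem_Icc] at hr
      rw [ptv_val (wcond_mk hl hln hr.1 hr.2)]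

lemma card_Pset {l : List Bool} (hl : l ≠ []) (hln : l.length ≤ n) :
    (Pset n l).card = (n - l.length + 1) * 2 ^ (n - l.length) := by
  have key : ∀ d : ℕ, ∀ l : List Bool, l ≠ [] → l.length ≤ n → n - l.length = d →
      (Pset n l).card = (d + 1) * 2 ^ d := by
    intro d
    induction d with
    | zero =>
      intro l hl hln hd
      rw [Pset_leaf (by omega), card_eSet hl hln, hd]
      norm_num
    | succ d ih =>
      intro l hl hln hd
      have hlt : l.length < n := by omega
      have hlb : ∀ b : Bool, (Pset n (l ++ [b])).card = (d + 1) * 2 ^ d := by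
        intro b
        apply ih
        · simp
        · rw [List.length_append]; simp; omega
        · rw [List.length_append]; simp; omega
      rw [Pset_split hlt]
      rw [Finset.card_union_of_disjoint, Finset.card_union_of_disjoint]
      · rw [card_eSet hl hln, hlb false, hlb true, hd, pow_succ]
        ring
      · exact Pset_disj (by simp) (by simp)
      · rw [Finset.disjoint_union_right]
        exact ⟨eSet_disj_Pset false, eSet_disj_Pset true⟩
  exact key (n - l.length) l hl hln rfl

end HCL

namespace HCL
variable {n : ℕ}

lemma symmDiff_insert {A S : Finset (Wvertex 2 n)} {v : Wvertex 2 n} (hv : v ∉ S) :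
    A ∆ S ∆ {v} = A ∆ insert v S := by
  rw [symmDiff_assoc]
  congr 1
  rw [Disjoint.symmDiff_eq_sup (by simpa using hv)]
  rw [Finset.sup_eq_union, Finset.union_comm, ← Finset.insert_eq]

lemma symmDiff_union_disj {A S T : Finset (Wvertex 2 n)} (h : Disjoint S T) :
    A ∆ (S ∪ T) = A ∆ S ∆ T := by
  rw [symmDiff_assoc, Disjoint.symmDiff_eq_sup h, Finset.sup_eq_union]

/-- walking down a subdivided edge, toggling every lamp on the way. -/
lemma walk_edge_toggle {l : List Bool} (hl : l ≠ []) (hln : l.length ≤ n) :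
    ∀ r, 1 ≤ r → r ≤ 2 ^ (n - l.length) → ∀ A : Finset (Wvertex 2 n),
      dle (Lam (WGraph 2 n)) (A, nodev n l.dropLast) (A ∆ eUpTo n l r, ptv n l r) (2 * r) := by
  intro r
  induction r with
  | zero => omega
  | succ r ih =>
    intro _ hr2 A
    rcases Nat.eq_zero_or_pos r with rfl | hr
    · -- base case r = 1
      have h1 : eUpTo n l 1 = {ptv n l 1} := by
        rw [show (1 : ℕ) = 0 + 1 from rfl, eUpTo_succ hl hln (by omega), eUpTo_zero hl]
        simp
      have step1 := dle_of_adj (lam_adj_move A (adj_top hl hln))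
      have step2 := dle_of_adj (lam_adj_toggle (G := WGraph 2 n) A (ptv n l 1))
      have := dle_trans step1 step2
      rw [← h1] at this
      exact dle_mono this (by omega)
    · -- inductive step
      have h1 := ih hr (by omega) A
      have step1 := dle_of_adj (lam_adj_move (A ∆ eUpTo n l r) (adj_step hl hln hr hr2))
      have step2 := dle_of_adj (lam_adj_toggle (G := WGraph 2 n) (A ∆ eUpTo n l r) (ptv n l (r + 1)))
      have hc : WCond 2 n (l, r + 1) := wcond_mk hl hln (by omega) hr2
      have heq : A ∆ eUpTo n l r ∆ {ptv n l (r + 1)} = A ∆ eUpTo n l (r + 1) := by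
        rw [symmDiff_insert (ptv_not_mem_eUpTo hc), ← eUpTo_succ hl hln hr2]
      have := dle_trans (dle_trans h1 step1) step2
      rw [heq] at this
      exact dle_mono this (by omega)

/-- walking down a subdivided edge without toggling. -/
lemma walk_edge_move {l : List Bool} (hl : l ≠ []) (hln : l.length ≤ n) :
    ∀ r, 1 ≤ r → r ≤ 2 ^ (n - l.length) → ∀ A : Finset (Wvertex 2 n),
      dle (Lam (WGraph 2 n)) (A, nodev n l.dropLast) (A, ptv n l r) r := by
  intro r
  induction r with
  | zero => omega
  | succ r ih =>
    intro _ hr2 A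
    rcases Nat.eq_zero_or_pos r with rfl | hr
    · exact dle_of_adj (lam_adj_move A (adj_top hl hln))
    · have h1 := ih hr (by omega) A
      have step1 := dle_of_adj (lam_adj_move A (adj_step hl hln hr hr2))
      exact dle_trans h1 step1

lemma nodev_eq_ptv {l : List Bool} (hl : l ≠ []) :
    nodev n l = ptv n l (2 ^ (n - l.length)) := by
  rw [nodev, if_neg hl]

/-- traversal of the whole subtree below (and including) the edge into `l`,
toggling all its lamps, returning to the parent node. -/
lemma walk_subtree :
    ∀ d : ℕ, ∀ l : List Bool, l ≠ [] → l.length ≤ n → n - l.length = d →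
    ∀ A : Finset (Wvertex 2 n),
      dle (Lam (WGraph 2 n)) (A, nodev n l.dropLast) (A ∆ Pset n l, nodev n l.dropLast)
        (3 * (Pset n l).card) := by
  intro d
  induction d with
  | zero =>
    intro l hl hln hd A
    -- leaf edge: length 2^0 = 1
    have hpow : 2 ^ (n - l.length) = 1 := by rw [hd]; norm_num
    have h1 := walk_edge_toggle hl hln 1 le_rfl (by omega) A
    have h2 := dle_symm (walk_edge_move hl hln 1 le_rfl (by omega) (A ∆ eUpTo n l 1))
    have heq : eUpTo n l 1 = Pset n l := by
      rw [show (1:ℕ) = 2 ^ (n - l.length) from hpow.symm, eUpTo_full hl hln,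
        ← Pset_leaf (by omega)]
    have := dle_trans h1 h2
    rw [heq] at this
    have hcard : (Pset n l).card = 1 := by
      rw [Pset_leaf (by omega), card_eSet hl hln, hpow]
    rw [hcard]
    exact dle_mono this (by omega)
  | succ d ih =>
    intro l hl hln hd A
    have hlt : l.length < n := by omega
    have hpow1 : 1 ≤ 2 ^ (n - l.length) := Nat.one_le_two_pow
    -- down, toggling the edge
    have h1 := walk_edge_toggle hl hln (2 ^ (n - l.length)) hpow1 le_rfl A
    rw [eUpTo_full hl hln, ← nodev_eq_ptv hl] at h1
    -- the two subtrees
    have hsub : ∀ (b : Bool) (B : Finset (Wvertex 2 n)),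
        dle (Lam (WGraph 2 n)) (B, nodev n l) (B ∆ Pset n (l ++ [b]), nodev n l)
          (3 * (Pset n (l ++ [b])).card) := by
      intro b B
      have hlb : (l ++ [b]).length ≤ n := by rw [List.length_append]; simp; omega
      have := ih (l ++ [b]) (by simp) hlb
        (by rw [List.length_append]; simp; omega) B
      rwa [List.dropLast_concat] at this
    have h2 := hsub false (A ∆ eSet n l)
    have h3 := hsub true (A ∆ eSet n l ∆ Pset n (l ++ [false]))
    -- back up
    have h4 := dle_symm (walk_edge_move hl hln (2 ^ (n - l.length)) hpow1 le_rfl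
      (A ∆ eSet n l ∆ Pset n (l ++ [false]) ∆ Pset n (l ++ [true])))
    rw [← nodev_eq_ptv hl] at h4
    have hall := dle_trans (dle_trans (dle_trans h1 h2) h3) h4
    have heq : A ∆ eSet n l ∆ Pset n (l ++ [false]) ∆ Pset n (l ++ [true]) = A ∆ Pset n l := by
      rw [← symmDiff_union_disj (eSet_disj_Pset false), ← symmDiff_union_disj ?_,
        Finset.union_assoc, ← Pset_split hlt]
      rw [Finset.disjoint_union_left]
      exact ⟨eSet_disj_Pset true, Pset_disj (by simp) (by simp)⟩
    rw [heq] at hall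
    -- cost accounting
    have hcard : (Pset n l).card = (eSet n l).card + ((Pset n (l ++ [false])).card
        + (Pset n (l ++ [true])).card) := by
      rw [Pset_split hlt, Finset.card_union_of_disjoint, Finset.card_union_of_disjoint]
      · exact Pset_disj (by simp) (by simp)
      · rw [Finset.disjoint_union_right]
        exact ⟨eSet_disj_Pset false, eSet_disj_Pset true⟩
    have hce : (eSet n l).card = 2 ^ (n - l.length) := card_eSet hl hln
    apply dle_mono hall
    rw [hcard, hce]
    ring_nf
    omega

/-- walk from the root to any node. -/
lemma walk_root (m : List Bool) (hm : m.length ≤ n) (A : Finset (Wvertex 2 n)) :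
    dle (Lam (WGraph 2 n)) (A, Wroot 2 n) (A, nodev n m) (wdl n m.length) := by
  induction m using List.reverseRecOn with
  | nil =>
    rw [nodev_nil]
    exact dle_refl _
  | append_singleton m b ih =>
    have hm' : m.length ≤ n := by
      rw [List.length_append] at hm
      simp at hm
      omega
    have h1 := ih hm'
    have hmb : (m ++ [b]).length ≤ n := hm
    have h2 := walk_edge_move (l := m ++ [b]) (by simp) hmb
      (2 ^ (n - (m ++ [b]).length)) Nat.one_le_two_pow le_rfl A
    rw [List.dropLast_concat, ← nodev_eq_ptv (by simp)] at h2
    have := dle_trans h1 h2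
    apply dle_mono this
    have : (m ++ [b]).length = m.length + 1 := by simp
    rw [this, wdl_succ]

/-- a full coordinate walk: from the root, toggle all of `Pset l`, return to the root. -/
lemma walk_coord {l : List Bool} (hl : l ≠ []) (hln : l.length ≤ n)
    (A : Finset (Wvertex 2 n)) :
    dle (Lam (WGraph 2 n)) (A, Wroot 2 n) (A ∆ Pset n l, Wroot 2 n)
      (3 * (Pset n l).card + 2 * 2 ^ n) := by
  have hdln : l.dropLast.length ≤ n := by rw [length_dropLast']; omega
  have h1 := walk_root l.dropLast hdln A
  have h2 := walk_subtree (n - l.length) l hl hln rfl A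
  have h3 := dle_symm (walk_root l.dropLast hdln (A ∆ Pset n l))
  have hall := dle_trans (dle_trans h1 h2) h3
  apply dle_mono hall
  have := wdl_le_pow (n := n) l.dropLast.length hdln
  omega

end HCL

namespace HCL
variable {n k : ℕ}

lemma prefix_unique {g g' : Fin k → Bool} {m : List Bool}
    (h : List.ofFn g <+: m) (h' : List.ofFn g' <+: m) : g = g' := by
  have hlen : (List.ofFn g).length = (List.ofFn g').length := by simp
  have : List.ofFn g = List.ofFn g' := by
    rcases List.prefix_or_prefix_of_prefix h h' with hh | hh
    · exact hh.eq_of_length_le (le_of_eq hlen.symm)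
    · exact (hh.eq_of_length_le (le_of_eq hlen)).symm
  exact List.ofFn_injective this

lemma mem_lampSet {x : (Fin k → Bool) → Bool} {u : Wvertex 2 n} :
    u ∈ lampSet k n x ↔ ∃ g, x g = true ∧ (List.ofFn g) <+: u.1.1 := by
  rw [lampSet, Finset.mem_filter]
  simp [List.isPrefixOf_iff_prefix]

lemma lampSet_symmDiff (x y : (Fin k → Bool) → Bool) :
    lampSet k n x ∆ lampSet k n y =
      (Finset.univ.filter (fun g : Fin k → Bool => x g ≠ y g)).biUnion
        (fun g => Pset n (List.ofFn g)) := by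
  ext u
  rw [Finset.mem_symmDiff, Finset.mem_biUnion]
  simp only [mem_lampSet, mem_Pset, Finset.mem_filter, Finset.mem_univ, true_and]
  by_cases hg : ∃ g : Fin k → Bool, (List.ofFn g) <+: u.1.1
  · obtain ⟨g₀, hg₀⟩ := hg
    constructor
    · rintro (⟨⟨g, hxg, hp⟩, hny⟩ | ⟨⟨g, hyg, hp⟩, hnx⟩)
      · obtain rfl := prefix_unique hp hg₀
        refine ⟨g, ?_, hp⟩
        intro hxy
        exact hny ⟨g, hxy ▸ hxg, hp⟩
      · obtain rfl := prefix_unique hp hg₀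
        refine ⟨g, ?_, hp⟩
        intro hxy
        exact hnx ⟨g, hxy.symm ▸ hyg, hp⟩
    · rintro ⟨g, hne, hp⟩
      cases hx : x g with
      | false =>
        cases hy : y g with
        | false => exact absurd (hx.trans hy.symm) hne
        | true =>
          refine Or.inr ⟨⟨g, hy, hp⟩, ?_⟩
          rintro ⟨g', hxg', hp'⟩
          obtain rfl := prefix_unique hp' hp
          rw [hxg'] at hx
          exact absurd hx (by simp)
      | true =>
        cases hy : y g with
        | true => exact absurd (hx.trans hy.symm) hne
        | false =>
          refine Or.inl ⟨⟨g, hx, hp⟩, ?_⟩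
          rintro ⟨g', hyg', hp'⟩
          obtain rfl := prefix_unique hp' hp
          rw [hyg'] at hy
          exact absurd hy (by simp)
  · push_neg at hg
    constructor
    · rintro (⟨⟨g, _, hp⟩, -⟩ | ⟨⟨g, _, hp⟩, -⟩) <;> exact absurd hp (hg g)
    · rintro ⟨g, -, hp⟩
      exact absurd hp (hg g)

lemma ofFn_ne_nil (hk1 : 1 ≤ k) (g : Fin k → Bool) : List.ofFn g ≠ [] := by
  intro h
  have := congrArg List.length h
  simp at this
  omega

lemma card_lamp_symmDiff (hk1 : 1 ≤ k) (hkn : k ≤ n) (x y : (Fin k → Bool) → Bool) :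
    (lampSet k n x ∆ lampSet k n y).card =
      (Finset.univ.filter (fun g : Fin k → Bool => x g ≠ y g)).card
        * ((n - k + 1) * 2 ^ (n - k)) := by
  rw [lampSet_symmDiff]
  rw [Finset.card_biUnion]
  · rw [Finset.sum_congr rfl (fun g _ => ?_), Finset.sum_const, smul_eq_mul]
    rw [card_Pset (ofFn_ne_nil hk1 g) (by simp; omega)]
    simp
  · intro g _ g' _ hne
    apply Pset_disj (by simp)
    intro h
    exact hne (List.ofFn_injective h)

lemma root_not_mem_lamp_symmDiff (hk1 : 1 ≤ k) (x y : (Fin k → Bool) → Bool) :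
    Wroot 2 n ∉ lampSet k n x ∆ lampSet k n y := by
  rw [Finset.mem_symmDiff]
  have : ∀ z : (Fin k → Bool) → Bool, Wroot 2 n ∉ lampSet k n z := by
    intro z hz
    rw [mem_lampSet] at hz
    obtain ⟨g, -, hp⟩ := hz
    have := hp.length_le
    simp [Wroot] at this
    omega
  rintro (⟨h, -⟩ | ⟨h, -⟩) <;> exact this _ h

lemma walk_multi (hk1 : 1 ≤ k) (hkn : k ≤ n) (D : Finset (Fin k → Bool)) :
    ∀ A : Finset (Wvertex 2 n), dle (Lam (WGraph 2 n)) (A, Wroot 2 n)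
      (A ∆ D.biUnion (fun g => Pset n (List.ofFn g)), Wroot 2 n)
      (D.card * (3 * ((n - k + 1) * 2 ^ (n - k)) + 2 * 2 ^ n)) := by
  induction D using Finset.induction with
  | empty =>
    intro A
    have h0 : A ∆ (∅ : Finset (Fin k → Bool)).biUnion (fun g => Pset n (List.ofFn g)) = A := by
      rw [Finset.biUnion_empty, ← Finset.bot_eq_empty, symmDiff_bot]
    rw [h0, Finset.card_empty, Nat.zero_mul]
    exact dle_refl _
  | @insert g D hg ih =>
    intro A
    have hlg : (List.ofFn g).length ≤ n := by simp; omega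
    have h1 := walk_coord (ofFn_ne_nil hk1 g) hlg A
    have h2 := ih (A ∆ Pset n (List.ofFn g))
    have hdisj : Disjoint (Pset n (List.ofFn g)) (D.biUnion (fun g' => Pset n (List.ofFn g'))) := by
      rw [Finset.disjoint_biUnion_right]
      intro g' hg'
      apply Pset_disj (by simp)
      intro h
      obtain rfl := List.ofFn_injective h
      exact hg hg'
    have heq : A ∆ Pset n (List.ofFn g) ∆ D.biUnion (fun g' => Pset n (List.ofFn g')) =
        A ∆ (insert g D).biUnion (fun g' => Pset n (List.ofFn g')) := by
      rw [← symmDiff_union_disj hdisj, Finset.biUnion_insert]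
    rw [heq] at h2
    have hall := dle_trans h1 h2
    apply dle_mono hall
    rw [Finset.card_insert_of_notMem hg]
    rw [card_Pset (ofFn_ne_nil hk1 g) hlg]
    simp only [List.length_ofFn]
    ring_nf
    omega

end HCL

namespace HCL
variable {n : ℕ}

lemma root_eq_of_nil {u : Wvertex 2 n} (h : u.1.1 = []) : u = Wroot 2 n := by
  apply Subtype.ext
  have hr := u.2.2.2.1 h
  rw [show (Wroot 2 n).1 = (([] : List Bool), 0) from rfl, ← h, ← hr]

lemma univ_split (hn1 : 1 ≤ n) :
    (Finset.univ : Finset (Wvertex 2 n)) =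
      {Wroot 2 n} ∪ (Pset n [false] ∪ Pset n [true]) := by
  ext u
  simp only [Finset.mem_univ, true_iff, Finset.mem_union, Finset.mem_singleton, mem_Pset]
  rcases prefix_cases (List.nil_prefix (l := u.1.1)) with h | h | h
  · exact Or.inl (root_eq_of_nil h)
  · exact Or.inr (Or.inl (by simpa using h))
  · exact Or.inr (Or.inr (by simpa using h))

lemma root_not_mem_Pset (b : Bool) : Wroot 2 n ∉ Pset n [b] := by
  rw [mem_Pset]
  intro h
  have := h.length_le
  simp [Wroot] at this

lemma reach_univ_empty (n : ℕ) :
    (Lam (WGraph 2 n)).Reachable ((Finset.univ : Finset (Wvertex 2 n)), Wroot 2 n)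
      (∅, Wroot 2 n) := by
  rcases Nat.eq_zero_or_pos n with rfl | hn1
  · -- n = 0 : a single toggle
    have huniv : (Finset.univ : Finset (Wvertex 2 0)) = {Wroot 2 0} := by
      ext u
      simp only [Finset.mem_univ, true_iff, Finset.mem_singleton]
      exact root_eq_of_nil (List.length_eq_zero_iff.1 (Nat.le_antisymm u.2.1 (Nat.zero_le _)))
    have hadj : (Lam (WGraph 2 0)).Adj (Finset.univ, Wroot 2 0) (∅, Wroot 2 0) := by
      refine Or.inr ⟨rfl, ?_⟩
      rw [show (∅ : Finset (Wvertex 2 0)) = ⊥ from rfl, symmDiff_bot, huniv]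
    exact hadj.reachable
  · have t1 := dle_of_adj (lam_adj_toggle (G := WGraph 2 n)
      (Finset.univ : Finset (Wvertex 2 n)) (Wroot 2 n))
    have sf := walk_subtree (n - 1) [false] (by simp) (by simpa using Nat.one_le_iff_ne_zero.2 hn1.ne') (by simp)
      (Finset.univ ∆ {Wroot 2 n})
    have st := walk_subtree (n - 1) [true] (by simp) (by simpa using Nat.one_le_iff_ne_zero.2 hn1.ne') (by simp)
      (Finset.univ ∆ {Wroot 2 n} ∆ Pset n [false])
    rw [show ([false] : List Bool).dropLast = [] from rfl, nodev_nil] at sf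
    rw [show ([true] : List Bool).dropLast = [] from rfl, nodev_nil] at st
    have hall := dle_trans (dle_trans t1 sf) st
    have hd1 : Disjoint ({Wroot 2 n} : Finset (Wvertex 2 n)) (Pset n [false] ∪ Pset n [true]) := by
      rw [Finset.disjoint_union_right]
      constructor <;> · rw [Finset.disjoint_singleton_left]; exact root_not_mem_Pset _
    have hd2 : Disjoint (Pset n [false]) (Pset n [true]) := Pset_disj (by simp) (by simp)
    have heq : Finset.univ ∆ {Wroot 2 n} ∆ Pset n [false] ∆ Pset n [true] =
        (∅ : Finset (Wvertex 2 n)) := by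
      rw [← symmDiff_union_disj hd2, ← symmDiff_union_disj hd1, ← univ_split hn1,
        symmDiff_self]
      rfl
    rw [heq] at hall
    exact dle_reachable hall

lemma lampSet_true : lampSet 0 n (fun _ => true) = Finset.univ := by
  ext u
  simp only [Finset.mem_univ, iff_true]
  rw [mem_lampSet]
  exact ⟨(fun i => i.elim0), rfl, by simp⟩

lemma lampSet_false : lampSet 0 n (fun _ => false) = ∅ := by
  ext u
  rw [mem_lampSet]
  simp

end HCL

open HCL in
theorem Hamming_cube_into_lamplighter_aux (k : ℕ) (ε : ℝ) (hε : 0 < ε) (n : ℕ)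
    (hn : (n : ℝ) > 2 ^ (k + 1) / (3 * ε) + k - 1) :
    ∃ lam : ℝ, 0 < lam ∧ ∀ x y : (Fin k → Bool) → Bool,
      lam * hamCubeDist x y ≤
          ((Lam (WGraph 2 n)).dist (lampSet k n x, Wroot 2 n) (lampSet k n y, Wroot 2 n) : ℝ) ∧
        ((Lam (WGraph 2 n)).dist (lampSet k n x, Wroot 2 n) (lampSet k n y, Wroot 2 n) : ℝ) ≤
          (1 + ε) * lam * hamCubeDist x y := by
  rcases Nat.eq_zero_or_pos k with rfl | hk1
  · -- k = 0
    set dd := (Lam (WGraph 2 n)).dist (lampSet 0 n (fun _ => true), Wroot 2 n)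
      (lampSet 0 n (fun _ => false), Wroot 2 n) with hdd
    have hne : (lampSet 0 n (fun _ => true), Wroot 2 n) ≠
        (lampSet 0 n (fun _ => false), Wroot 2 n) := by
      rw [lampSet_true, lampSet_false]
      intro h
      have := congrArg Prod.fst h
      simp only at this
      have hroot : Wroot 2 n ∈ (Finset.univ : Finset (Wvertex 2 n)) := Finset.mem_univ _
      rw [this] at hroot
      exact absurd hroot (Finset.notMem_empty _)
    have hreach : (Lam (WGraph 2 n)).Reachable (lampSet 0 n (fun _ => true), Wroot 2 n)
        (lampSet 0 n (fun _ => false), Wroot 2 n) := by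
      rw [lampSet_true, lampSet_false]
      exact reach_univ_empty n
    have hpos : 0 < dd := hreach.pos_dist_of_ne hne
    refine ⟨dd, by exact_mod_cast hpos, ?_⟩
    intro x y
    by_cases hxy : x = y
    · subst hxy
      have hham : hamCubeDist x x = 0 := by
        rw [hamCubeDist]
        simp
      rw [hham, SimpleGraph.dist_self]
      norm_num
    · -- x ≠ y : the lamp sets are exactly the two configurations
      have hg : x ≠ y → ∀ g : Fin 0 → Bool, x g ≠ y g := by
        intro hxy g hg
        apply hxy
        funext g'
        rwa [Subsingleton.elim g' g]
      have hham : hamCubeDist x y = 1 := by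
        rw [hamCubeDist, Finset.filter_true_of_mem (fun g _ => hg hxy g)]
        rw [Finset.card_univ]
        simp
      have hxdet : ∀ z : (Fin 0 → Bool) → Bool, z = (fun _ => z default) := by
        intro z
        funext g
        rw [Subsingleton.elim g default]
      have hdist : (Lam (WGraph 2 n)).dist (lampSet 0 n x, Wroot 2 n)
          (lampSet 0 n y, Wroot 2 n) = dd := by
        have h1 := hg hxy default
        cases hx : x default with
        | false =>
          have hy : y default = true := by
            cases hy : y default with
            | false => exact absurd (hx.trans hy.symm) h1
            | true => rfl
          rw [show x = (fun _ => false) from by rw [hxdet x, hx],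
            show y = (fun _ => true) from by rw [hxdet y, hy]]
          rw [hdd, SimpleGraph.dist_comm]
        | true =>
          have hy : y default = false := by
            cases hy : y default with
            | true => exact absurd (hx.trans hy.symm) h1
            | false => rfl
          rw [show x = (fun _ => true) from by rw [hxdet x, hx],
            show y = (fun _ => false) from by rw [hxdet y, hy], hdd]
      rw [hdist, hham]
      have hdd0 : (0:ℝ) ≤ dd := Nat.cast_nonneg _
      constructor
      · norm_num
      · push_cast
        nlinarith
  · -- k ≥ 1
    have hkn : k ≤ n := by
      have hp : (0:ℝ) < 2 ^ (k + 1) / (3 * ε) := by positivity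
      have : ((k:ℝ) - 1) < n := by linarith
      have : (k:ℝ) < n + 1 := by linarith
      exact_mod_cast Nat.lt_succ_iff.1 (by exact_mod_cast this)
    set w : ℕ := (n - k + 1) * 2 ^ (n - k) with hw
    have hwpos : 0 < w := by positivity
    refine ⟨(3 * w : ℕ), by positivity, ?_⟩
    intro x y
    set D := Finset.univ.filter (fun g : Fin k → Bool => x g ≠ y g) with hD
    have hham : hamCubeDist x y = D.card := rfl
    -- the big walk
    have hwalk := walk_multi hk1 hkn D (lampSet k n x)
    have hend : lampSet k n x ∆ D.biUnion (fun g => Pset n (List.ofFn g)) = lampSet k n y := by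
      rw [← lampSet_symmDiff x y, symmDiff_symmDiff_cancel_left]
    rw [hend] at hwalk
    -- upper bound
    have hub : (Lam (WGraph 2 n)).dist (lampSet k n x, Wroot 2 n) (lampSet k n y, Wroot 2 n) ≤
        D.card * (3 * w + 2 * 2 ^ n) := dle_dist hwalk
    -- lower bound
    obtain ⟨p, hp⟩ := (dle_reachable hwalk).exists_walk_length_eq_dist
    have hlb0 := walk_lower (root_not_mem_lamp_symmDiff hk1 x y) p
    rw [card_lamp_symmDiff hk1 hkn x y, hp] at hlb0
    -- pass to the reals
    have hkey : (2:ℝ) * 2 ^ n ≤ ε * (3 * w) := by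
      have h1 : (2:ℝ) ^ (k + 1) / (3 * ε) < (n:ℝ) - k + 1 := by linarith
      have h2 : (2:ℝ) ^ (k + 1) < 3 * ε * ((n:ℝ) - k + 1) := by
        rw [div_lt_iff₀ (by positivity)] at h1
        linarith
      have h3 : (0:ℝ) < 2 ^ (n - k) := by positivity
      have h4 : (2:ℝ) ^ (k + 1) * 2 ^ (n - k) < 3 * ε * ((n:ℝ) - k + 1) * 2 ^ (n - k) := by
        exact mul_lt_mul_of_pos_right h2 h3
      have h5 : (2:ℝ) ^ (k + 1) * 2 ^ (n - k) = 2 * 2 ^ n := by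
        rw [← pow_add]
        rw [show k + 1 + (n - k) = n + 1 by omega, pow_succ]
        ring
      have h6 : ((w:ℕ):ℝ) = ((n:ℝ) - k + 1) * 2 ^ (n - k) := by
        rw [hw]
        push_cast [Nat.cast_sub hkn]
        ring
      rw [h6]
      nlinarith
    have hcard : (0:ℝ) ≤ (D.card : ℝ) := Nat.cast_nonneg _
    constructor
    · -- lower
      have : ((3 * (D.card * w) : ℕ) : ℝ) ≤
          ((Lam (WGraph 2 n)).dist (lampSet k n x, Wroot 2 n) (lampSet k n y, Wroot 2 n) : ℝ) :=
        Nat.cast_le.2 hlb0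
      rw [hham]
      push_cast at this ⊢
      nlinarith
    · -- upper
      have h7 : ((Lam (WGraph 2 n)).dist (lampSet k n x, Wroot 2 n)
          (lampSet k n y, Wroot 2 n) : ℝ) ≤ (D.card : ℝ) * (3 * w + 2 * 2 ^ n) := by
        exact_mod_cast hub
      rw [hham]
      push_cast at h7 ⊢
      nlinarith

/-- for `k ∈ ℕ`, `ε > 0`, and `n > 2^(k+1)/(3ε) + k - 1`, the Hamming cube
`H_{2^k}` (indexed by `I = {0,1}^k`) embeds into `Lam(W_{2,n})` with distortion at most
`1 + ε` via the map `x ↦ (⋃_{g : x g = 1} F_{k-1,g}^n, v₀)`, `v₀` the root. -/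
theorem Hamming_cube_into_lamplighter (k : ℕ) (ε : ℝ) (hε : 0 < ε) (n : ℕ)
    (hn : (n : ℝ) > 2 ^ (k + 1) / (3 * ε) + k - 1) :
    ∃ lam : ℝ, 0 < lam ∧ ∀ x y : (Fin k → Bool) → Bool,
      lam * hamCubeDist x y ≤
          ((Lam (WGraph 2 n)).dist (lampSet k n x, Wroot 2 n) (lampSet k n y, Wroot 2 n) : ℝ) ∧
        ((Lam (WGraph 2 n)).dist (lampSet k n x, Wroot 2 n) (lampSet k n y, Wroot 2 n) : ℝ) ≤
          (1 + ε) * lam * hamCubeDist x y := by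
  exact Hamming_cube_into_lamplighter_aux k ε hε n hn
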